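/- Let G be a finite simple graph with edge set E and clique number ω(G), and let (e_1,…,e_{i−1}) be a sequence of distinct edges of G. For each j ≤ i, let G_j be the spanning subgraph of G with edge set E ∖ {e_1,…,e_{j−1}}, and for j < i let N_j be the set of common neighbors in G_j of the two endpoints of e_j. Then ω(G) = max( ω(G_i), max_{1 ≤ j < i} ( 2 + ω(G[N_j]) ) ), where G[N_j] denotes the subgraph of G induced by N_j. In particular, either a maximum clique of G_i is a maximum clique of G, or for some j < i the endpoints of e_j together with a maximum clique of G[N_j] form a maximum clique of G. -/

import Mathlib

/-- The clique number `ω(G)` of a graph `G`: the largest size of a set of pairwise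
adjacent vertices (0 for a graph with no vertices). -/
noncomputable def cliqueNum' {V : Type*} (G : SimpleGraph V) : ℕ :=
  sSup {n | ∃ s : Finset V, G.IsNClique n s}

/-- The clique number `ω(G[N])` of the subgraph of `G` induced by the vertex set `N`. -/
noncomputable def cliqueNumOn {V : Type*} (G : SimpleGraph V) (N : Set V) : ℕ :=
  sSup {n | ∃ s : Finset V, ↑s ⊆ N ∧ G.IsNClique n s}

lemma bddAbove_cliqueSet {V : Type*} [Fintype V] (G : SimpleGraph V) :
    BddAbove {n | ∃ s : Finset V, G.IsNClique n s} := by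
  refine ⟨Fintype.card V, fun n hn => ?_⟩
  obtain ⟨s, hs⟩ := hn
  exact hs.2 ▸ Finset.card_le_univ s

lemma bddAbove_cliqueOnSet {V : Type*} [Fintype V] (G : SimpleGraph V) (N : Set V) :
    BddAbove {n | ∃ s : Finset V, ↑s ⊆ N ∧ G.IsNClique n s} := by
  refine ⟨Fintype.card V, fun n hn => ?_⟩
  obtain ⟨s, _, hs⟩ := hn
  exact hs.2 ▸ Finset.card_le_univ s

lemma nonempty_cliqueSet {V : Type*} (G : SimpleGraph V) :
    Set.Nonempty {n | ∃ s : Finset V, G.IsNClique n s} :=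
  ⟨0, ∅, by simp⟩

lemma nonempty_cliqueOnSet {V : Type*} (G : SimpleGraph V) (N : Set V) :
    Set.Nonempty {n | ∃ s : Finset V, ↑s ⊆ N ∧ G.IsNClique n s} :=
  ⟨0, ∅, by simp⟩

/-- Given a sequence `L = (e_1, …, e_{i-1})` of distinct edges of `G`, letting
`G_j` be the spanning subgraph of `G` with edge set `E ∖ {e_1, …, e_{j-1}}` and `N_j`
the set of common neighbors in `G_j` of the endpoints of `e_j`, the clique number of `G`
equals the maximum of `ω(G_i)` and `max_j (2 + ω(G[N_j]))`. -/
theorem cliqueNum_eq_max_of_edge_seq {V : Type*} [Fintype V] [DecidableEq V]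
    (G : SimpleGraph V) (L : List (Sym2 V)) (hnd : L.Nodup)
    (hE : ∀ e ∈ L, e ∈ G.edgeSet) :
    cliqueNum' G =
      max (cliqueNum' (G.deleteEdges {e | e ∈ L}))
        ((Finset.univ : Finset (Fin L.length)).sup fun j =>
          2 + cliqueNumOn G
            {w | ∀ x ∈ L.get j, (G.deleteEdges {e | e ∈ L.take j.1}).Adj x w}) := by
  classical
  apply le_antisymm
  · -- ω(G) ≤ max
    apply csSup_le (nonempty_cliqueSet G)
    rintro n ⟨s, hs⟩
    by_cases hcl : (G.deleteEdges {e | e ∈ L}).IsClique ↑s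
    · exact le_max_of_le_left (le_csSup (bddAbove_cliqueSet _) ⟨s, hcl, hs.2⟩)
    · -- some edge of L lies inside s
      simp only [SimpleGraph.isClique_iff, Set.Pairwise] at hcl
      push_neg at hcl
      obtain ⟨a, ha, b, hb, hab, hnadj⟩ := hcl
      have haG : G.Adj a b := hs.1 ha hb hab
      have habL : s(a, b) ∈ L := by
        by_contra h
        exact hnadj (SimpleGraph.deleteEdges_adj.mpr ⟨haG, h⟩)
      -- the set of indices whose edge lies inside s
      set T : Finset (Fin L.length) :=
        Finset.univ.filter (fun k => ∀ x ∈ L.get k, x ∈ s) with hT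
      have hTne : T.Nonempty := by
        obtain ⟨k, hk⟩ := List.mem_iff_get.mp habL
        refine ⟨k, Finset.mem_filter.mpr ⟨Finset.mem_univ _, ?_⟩⟩
        rw [hk]
        intro x hx
        rcases Sym2.mem_iff.mp hx with rfl | rfl
        · exact ha
        · exact hb
      set j := T.min' hTne with hjdef
      have hjmem : ∀ x ∈ L.get j, x ∈ s :=
        (Finset.mem_filter.mp (T.min'_mem hTne)).2
      have hjmin : ∀ k ∈ T, j ≤ k := fun k hk => T.min'_le k hk
      obtain ⟨u, v, huv⟩ : ∃ u w, L.get j = s(u, w) :=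
        Sym2.exists.mp ⟨L.get j, rfl⟩
      have huvE : G.Adj u v := by
        have := hE _ (List.get_mem L j)
        rw [huv, SimpleGraph.mem_edgeSet] at this
        exact this
      have hune : u ≠ v := huvE.ne
      have hus : u ∈ s := hjmem u (by rw [huv]; exact Sym2.mem_mk_left u v)
      have hvs : v ∈ s := hjmem v (by rw [huv]; exact Sym2.mem_mk_right u v)
      set s' := (s.erase u).erase v with hs'
      have hvs' : v ∈ s.erase u := Finset.mem_erase.mpr ⟨hune.symm, hvs⟩
      have hcard' : s'.card = n - 2 := by
        rw [hs', Finset.card_erase_of_mem hvs', Finset.card_erase_of_mem hus, hs.2]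
        omega
      have hn2 : 2 ≤ n := by
        have : ({u, v} : Finset V).card ≤ s.card := by
          apply Finset.card_le_card
          intro x hx
          rcases Finset.mem_insert.mp hx with rfl | hx
          · exact hus
          · exact Finset.mem_singleton.mp hx ▸ hvs
        rw [Finset.card_pair hune] at this
        have hcn := hs.2
        omega
      have hsub : ↑s' ⊆ {w | ∀ x ∈ L.get j,
          (G.deleteEdges {e | e ∈ L.take j.1}).Adj x w} := by
        intro w hw
        have hw' : w ∈ s' := hw
        have hwv : w ≠ v := (Finset.mem_erase.mp hw').1
        have hwu : w ≠ u := (Finset.mem_erase.mp (Finset.mem_erase.mp hw').2).1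
        have hws : w ∈ s := Finset.mem_of_mem_erase (Finset.mem_of_mem_erase hw')
        intro x hx
        -- x is u or v
        rw [huv] at hx
        have hnotin : ∀ y ∈ s, s(y, w) ∉ L.take j.1 := by
          intro y hy hmem
          obtain ⟨i, hi, hgi⟩ := List.mem_take_iff_getElem.mp hmem
          have hiL : i < L.length := lt_of_lt_of_le hi inf_le_right
          have hij : i < j.1 := lt_of_lt_of_le hi inf_le_left
          have hkT : (⟨i, hiL⟩ : Fin L.length) ∈ T := by
            refine Finset.mem_filter.mpr ⟨Finset.mem_univ _, ?_⟩
            intro x hx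
            have : L.get ⟨i, hiL⟩ = s(y, w) := hgi
            rw [this] at hx
            rcases Sym2.mem_iff.mp hx with rfl | rfl
            · exact hy
            · exact hws
          have := hjmin _ hkT
          exact absurd this (by simp [Fin.le_def]; omega)
        rcases Sym2.mem_iff.mp hx with h | h
        · rw [h]
          exact SimpleGraph.deleteEdges_adj.mpr
            ⟨hs.1 hus hws (Ne.symm hwu), hnotin u hus⟩
        · rw [h]
          exact SimpleGraph.deleteEdges_adj.mpr
            ⟨hs.1 hvs hws (Ne.symm hwv), hnotin v hvs⟩
      have hclique' : G.IsNClique s'.card s' := by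
        refine ⟨hs.1.subset ?_, rfl⟩
        intro x hx
        exact Finset.mem_of_mem_erase (Finset.mem_of_mem_erase hx)
      have hle : s'.card ≤ cliqueNumOn G {w | ∀ x ∈ L.get j,
          (G.deleteEdges {e | e ∈ L.take j.1}).Adj x w} :=
        le_csSup (bddAbove_cliqueOnSet _ _) ⟨s', hsub, hclique'⟩
      refine le_max_of_le_right (le_trans ?_ (Finset.le_sup (Finset.mem_univ j)))
      omega
  · -- max ≤ ω(G)
    apply max_le
    · apply csSup_le (nonempty_cliqueSet _)
      rintro n ⟨s, hs⟩
      exact le_csSup (bddAbove_cliqueSet G)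
        ⟨s, hs.1.mono (SimpleGraph.deleteEdges_le _), hs.2⟩
    · apply Finset.sup_le
      intro j _
      set N := {w | ∀ x ∈ L.get j, (G.deleteEdges {e | e ∈ L.take j.1}).Adj x w} with hN
      have hmem := Nat.sSup_mem (nonempty_cliqueOnSet G N) (bddAbove_cliqueOnSet G N)
      obtain ⟨t, htN, htc⟩ := hmem
      obtain ⟨u, v, huv⟩ : ∃ u w, L.get j = s(u, w) :=
        Sym2.exists.mp ⟨L.get j, rfl⟩
      have huvE : G.Adj u v := by
        have := hE _ (List.get_mem L j)
        rw [huv, SimpleGraph.mem_edgeSet] at this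
        exact this
      have hadjN : ∀ w ∈ N, G.Adj u w ∧ G.Adj v w := by
        intro w hw
        constructor
        · exact ((SimpleGraph.deleteEdges_adj.mp
            (hw u (by rw [huv]; exact Sym2.mem_mk_left u v)))).1
        · exact ((SimpleGraph.deleteEdges_adj.mp
            (hw v (by rw [huv]; exact Sym2.mem_mk_right u v)))).1
      have hut : u ∉ t := fun h => G.irrefl (hadjN u (htN h)).1
      have hvt : v ∉ t := fun h => G.irrefl (hadjN v (htN h)).2
      set t' := insert u (insert v t) with ht'
      have hcard : t'.card = t.card + 2 := by
        rw [ht', Finset.card_insert_of_notMem, Finset.card_insert_of_notMem hvt]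
        intro h
        rcases Finset.mem_insert.mp h with rfl | h
        · exact G.irrefl huvE
        · exact hut h
      have hclique : G.IsClique ↑t' := by
        have h1 : G.IsClique (insert v ↑t) := by
          apply htc.1.insert
          intro b hb _
          exact (hadjN b (htN hb)).2
        have h2 : G.IsClique (insert u (insert v ↑t)) := by
          apply h1.insert
          intro b hb hne
          rcases Set.mem_insert_iff.mp hb with rfl | hb
          · exact huvE
          · exact (hadjN b (htN hb)).1
        rwa [ht', Finset.coe_insert, Finset.coe_insert]
      have : t'.card ∈ {n | ∃ s : Finset V, G.IsNClique n s} :=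
        ⟨t', hclique, rfl⟩
      have hle := le_csSup (bddAbove_cliqueSet G) this
      rw [hcard] at hle
      have : sSup {n | ∃ s : Finset V, ↑s ⊆ N ∧ G.IsNClique n s} = t.card := htc.2.symm
      unfold cliqueNumOn cliqueNum'
      omega
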